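/- Let X be an irreducible real affine variety with coordinate ring A = ℝ[x_1,...,x_n]/I, I a real prime ideal, let f ∈ K^{R+}(X(ℝ)), and let p be a real prime ideal of A defining a real subvariety V of X, with V(ℝ) = { x ∈ X(ℝ) : b(x) = 0 for all b ∈ p }. Then the restriction of f to V(ℝ) is rational: there exist a, b ∈ A with b ∉ p such that f(x)·b(x) = a(x) for every x ∈ V(ℝ) with b(x) ≠ 0, i.e. f|_{V(ℝ)} agrees with a rational function of V on the nonvanishing locus of b. -/

import Mathlib

/-- An ideal `I` of a commutative ring is *real* if whenever a finite sum of squares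
of elements lies in `I`, then each of these elements lies in `I`. -/
def Ideal.IsRealIdeal {A : Type*} [CommRing A] (I : Ideal A) : Prop :=
  ∀ (n : ℕ) (a : Fin n → A), (∑ i, a i ^ 2) ∈ I → ∀ i, a i ∈ I

/-- An integral extension `φ : A → B` is *R-subintegral* if for every real prime ideal `p`
of `A` there is exactly one prime ideal `q` of `B` lying over `p`, this `q` is a real ideal,
and the induced map of residue fields `κ(p) → κ(q)` is an isomorphism.  (The residue-field
isomorphism is expressed by its surjectivity: every `b : B` is congruent mod `q` to a
fraction `a/s` with `a s : A`, `s ∉ p`; injectivity is automatic for fields.) -/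
def RSubintegral {A B : Type*} [CommRing A] [CommRing B] (φ : A →+* B) : Prop :=
  ∀ p : Ideal A, p.IsPrime → p.IsRealIdeal →
    (∃! q : Ideal B, q.IsPrime ∧ q.comap φ = p) ∧
    ∀ q : Ideal B, q.IsPrime → q.comap φ = p →
      q.IsRealIdeal ∧ ∀ b : B, ∃ a s : A, s ∉ p ∧ φ s * b - φ a ∈ q

/-- The sum `S + I` of a subring and an ideal, as a subring. -/
def Subring.addIdeal {R : Type*} [CommRing R] (S : Subring R) (I : Ideal R) : Subring R where
  carrier := {x | ∃ s ∈ S, ∃ r ∈ I, x = s + r}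
  zero_mem' := ⟨0, S.zero_mem, 0, I.zero_mem, by ring⟩
  one_mem' := ⟨1, S.one_mem, 0, I.zero_mem, by ring⟩
  add_mem' := by
    rintro x y ⟨s, hs, r, hr, rfl⟩ ⟨s', hs', r', hr', rfl⟩
    exact ⟨s + s', S.add_mem hs hs', r + r', I.add_mem hr hr', by ring⟩
  neg_mem' := by
    rintro x ⟨s, hs, r, hr, rfl⟩
    exact ⟨-s, S.neg_mem hs, -r, I.neg_mem hr, by ring⟩
  mul_mem' := by
    rintro x y ⟨s, hs, r, hr, rfl⟩ ⟨s', hs', r', hr', rfl⟩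
    exact ⟨s * s', S.mul_mem hs hs',
      s * r' + r * s' + r * r',
      I.add_mem (I.add_mem (I.mul_mem_left _ hr') (I.mul_mem_right _ hr)) (I.mul_mem_left _ hr'),
      by ring⟩

variable {A B : Type*} [CommRing A] [CommRing B]

/-- The canonical map `A_p → B_p`, where `B_p` denotes the localization of `B` at the
multiplicative set `φ(A ∖ p)`. -/
noncomputable def locMap (φ : A →+* B) (p : Ideal A) [p.IsPrime] :
    Localization.AtPrime p →+* Localization (p.primeCompl.map φ) :=
  IsLocalization.map _ φ (Submonoid.le_comap_map p.primeCompl)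

/-- The subring `A_p + Rad(B_p)` of `B_p`, where `A_p` is the image of the localization of
`A` at `p` and `Rad` is the Jacobson radical. -/
noncomputable def localCondSubring (φ : A →+* B) (p : Ideal A) [p.IsPrime] :
    Subring (Localization (p.primeCompl.map φ)) :=
  (locMap φ p).range.addIdeal ((⊥ : Ideal (Localization (p.primeCompl.map φ))).jacobson)

/-- The R-seminormalization `A^{R+}_B` of `A` in `B`: the elements `b : B` such that for every
real prime ideal `p` of `A`, the image of `b` in `B_p` lies in `A_p + Rad(B_p)`. -/
noncomputable def RSemi (φ : A →+* B) : Subring B :=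
  ⨅ p : {p : Ideal A // p.IsPrime ∧ p.IsRealIdeal},
    letI : p.1.IsPrime := p.2.1
    Subring.comap (algebraMap B (Localization (p.1.primeCompl.map φ))) (localCondSubring φ p.1)

lemma mem_RSemi_of_range (φ : A →+* B) (a : A) : φ a ∈ RSemi φ := by
  rw [RSemi, Subring.mem_iInf]
  intro p
  letI : p.1.IsPrime := p.2.1
  rw [Subring.mem_comap]
  refine ⟨locMap φ p.1 (algebraMap A (Localization.AtPrime p.1) a), ⟨_, rfl⟩,
    0, Ideal.zero_mem _, ?_⟩
  rw [add_zero, locMap, IsLocalization.map_eq]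

set_option synthInstance.maxHeartbeats 1000000

/-- The coordinate ring `ℝ[x_1,…,x_n]/I`. -/
abbrev CoordRing (n : ℕ) (I : Ideal (MvPolynomial (Fin n) ℝ)) :=
  MvPolynomial (Fin n) ℝ ⧸ I

/-- The real points `X(ℝ)` of the variety defined by `I`. -/
def XR (n : ℕ) (I : Ideal (MvPolynomial (Fin n) ℝ)) : Set (Fin n → ℝ) :=
  {x | ∀ p ∈ I, MvPolynomial.eval x p = 0}

/-- The complex points `X(ℂ)` of the variety defined by `I`. -/
def XC (n : ℕ) (I : Ideal (MvPolynomial (Fin n) ℝ)) : Set (Fin n → ℂ) :=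
  {z | ∀ p ∈ I, MvPolynomial.eval₂ Complex.ofRealHom z p = 0}

/-- Evaluation of the coordinate ring at a real point. -/
noncomputable def evR {n : ℕ} {I : Ideal (MvPolynomial (Fin n) ℝ)} {x : Fin n → ℝ}
    (hx : x ∈ XR n I) : CoordRing n I →+* ℝ :=
  Ideal.Quotient.lift I (MvPolynomial.eval x) (fun p hp => hx p hp)

/-- Evaluation of the coordinate ring at a complex point. -/
noncomputable def evC {n : ℕ} {I : Ideal (MvPolynomial (Fin n) ℝ)} {z : Fin n → ℂ}
    (hz : z ∈ XC n I) : CoordRing n I →+* ℂ :=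
  Ideal.Quotient.lift I (MvPolynomial.eval₂Hom Complex.ofRealHom z) (fun p hp => hz p hp)

/-- Complexification `ℝⁿ ⊆ ℂⁿ` of a point. -/
def cx {n : ℕ} (x : Fin n → ℝ) : Fin n → ℂ := fun i => (x i : ℂ)

lemma cx_mem {n : ℕ} {I : Ideal (MvPolynomial (Fin n) ℝ)} {x : Fin n → ℝ}
    (hx : x ∈ XR n I) : cx x ∈ XC n I := by
  intro p hp
  have h2 := MvPolynomial.eval₂_comp_left Complex.ofRealHom (RingHom.id ℝ) x p
  rw [RingHom.comp_id] at h2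
  have hx0 : MvPolynomial.eval₂ (RingHom.id ℝ) x p = 0 := hx p hp
  have hcx : (⇑Complex.ofRealHom ∘ x) = cx x := rfl
  rw [hcx, hx0, map_zero] at h2
  exact h2.symm

/-- The ring `K^{R+}(X(ℝ))` of functions on `X(ℝ)` which become polynomial on the
R-seminormalization: `f` is in it iff there is `g ∈ A^{R+}` (inside the integral closure `A'`
of the coordinate ring `A` in its fraction field `K`) with `ψ(g) = f(x)` for every real point
`x` and every ℝ-algebra homomorphism `ψ : A' → ℂ` lying over the evaluation at `x`. -/
def KRplus (n : ℕ) (I : Ideal (MvPolynomial (Fin n) ℝ)) (K : Type*) [Field K]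
    [Algebra (CoordRing n I) K] [IsFractionRing (CoordRing n I) K]
    [Algebra ℝ K] [IsScalarTower ℝ (CoordRing n I) K]
    (f : ↥(XR n I) → ℝ) : Prop :=
  ∃ g ∈ RSemi (algebraMap (CoordRing n I) ↥(integralClosure (CoordRing n I) K)),
    ∀ (x : Fin n → ℝ) (hx : x ∈ XR n I)
      (ψ : ↥(integralClosure (CoordRing n I) K) →ₐ[ℝ] ℂ),
      (∀ a : CoordRing n I,
        ψ (algebraMap (CoordRing n I) ↥(integralClosure (CoordRing n I) K) a) = (evR hx a : ℂ)) →
      ψ g = (f ⟨x, hx⟩ : ℂ)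

set_option maxHeartbeats 1000000 in
lemma RSemi.exists_rep {A B : Type*} [CommRing A] [CommRing B] [IsDomain B]
    [Algebra A B] (hinj : Function.Injective (algebraMap A B))
    {g : B} (hg : g ∈ RSemi (algebraMap A B : A →+* B))
    (p : Ideal A) (hp : p.IsPrime) (hpreal : p.IsRealIdeal) :
    ∃ a s : A, s ∉ p ∧ ∃ q : Ideal B, q.IsPrime ∧
      q.comap (algebraMap A B) ≤ p ∧
      algebraMap A B s * g - algebraMap A B a ∈ q := by
  haveI := hp
  let φ : A →+* B := (algebraMap A B : A →+* B)
  have hmem : algebraMap B (Localization (p.primeCompl.map φ)) g ∈ localCondSubring φ p := by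
    have h := Subring.mem_iInf.mp hg ⟨p, hp, hpreal⟩
    rw [Subring.mem_comap] at h
    exact h
  obtain ⟨u, ⟨α, rfl⟩, r, hr, heq⟩ := hmem
  obtain ⟨⟨a, s⟩, rfl⟩ := IsLocalization.mk'_surjective p.primeCompl α
  dsimp only at heq
  refine ⟨a, s, s.2, ?_⟩
  have hmk : locMap φ p (IsLocalization.mk' (Localization.AtPrime p) a s)
      = IsLocalization.mk' (Localization (p.primeCompl.map φ)) (φ a)
          ⟨φ ↑s, Submonoid.mem_map_of_mem φ s.2⟩ := by
    rw [locMap]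
    exact IsLocalization.map_mk' _ a s
  have hspec : algebraMap B (Localization (p.primeCompl.map φ)) (φ ↑s) *
      IsLocalization.mk' (Localization (p.primeCompl.map φ)) (φ a)
        ⟨φ ↑s, Submonoid.mem_map_of_mem φ s.2⟩
      = algebraMap B (Localization (p.primeCompl.map φ)) (φ a) := by
    rw [mul_comm]
    exact IsLocalization.mk'_spec _ (φ a) ⟨φ ↑s, Submonoid.mem_map_of_mem φ s.2⟩
  have himg : algebraMap B (Localization (p.primeCompl.map φ)) (φ ↑s * g - φ a)
      ∈ (⊥ : Ideal (Localization (p.primeCompl.map φ))).jacobson := by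
    have heq2 : algebraMap B (Localization (p.primeCompl.map φ)) (φ ↑s * g - φ a)
        = algebraMap B (Localization (p.primeCompl.map φ)) (φ ↑s) * r := by
      rw [map_sub, map_mul, heq, hmk, mul_add, hspec]
      ring
    rw [heq2]
    exact Ideal.mul_mem_left _ _ hr
  have hM : p.primeCompl.map φ ≤ nonZeroDivisors B := by
    rintro _ ⟨t, ht, rfl⟩
    refine mem_nonZeroDivisors_of_ne_zero fun h0 => ?_
    have ht0 : t = 0 := hinj (by simpa using h0)
    exact ht (ht0 ▸ p.zero_mem)
  haveI : Nontrivial (Localization (p.primeCompl.map φ)) := by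
    have hinj2 := IsLocalization.injective (Localization (p.primeCompl.map φ)) hM
    exact nontrivial_of_ne (algebraMap B _ 0) (algebraMap B _ 1)
      (fun h => zero_ne_one (hinj2 h))
  obtain ⟨Q, hQmax⟩ := Ideal.exists_maximal (Localization (p.primeCompl.map φ))
  refine ⟨Q.comap (algebraMap B (Localization (p.primeCompl.map φ))),
    hQmax.isPrime.comap _, ?_, ?_⟩
  · intro t ht
    by_contra htp
    have hu : IsUnit (algebraMap B (Localization (p.primeCompl.map φ)) (φ t)) :=
      IsLocalization.map_units _ ⟨φ t, Submonoid.mem_map_of_mem φ (show _ ∈ p.primeCompl from htp)⟩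
    have htQ : algebraMap B (Localization (p.primeCompl.map φ)) (φ t) ∈ Q :=
      Ideal.mem_comap.mp (Ideal.mem_comap.mp ht)
    exact hQmax.ne_top (Q.eq_top_of_isUnit_mem htQ hu)
  · have hle : (⊥ : Ideal (Localization (p.primeCompl.map φ))).jacobson ≤ Q :=
      sInf_le ⟨bot_le, hQmax⟩
    exact Ideal.mem_comap.mpr (hle himg)

set_option maxHeartbeats 1000000 in
lemma exists_algHom_to_C {A B : Type*} [CommRing A] [CommRing B]
    [Algebra ℝ A] [Algebra ℝ B] [Algebra A B] [IsScalarTower ℝ A B]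
    [Algebra.IsIntegral A B]
    (q : Ideal B) (hq : q.IsPrime) (ev : A →+* ℝ)
    (hev : ∀ t : ℝ, ev (algebraMap ℝ A t) = t)
    (hker : RingHom.ker ev ≤ q.comap (algebraMap A B)) :
    ∃ ψ : B →ₐ[ℝ] ℂ, (∀ b ∈ q, ψ b = 0) ∧
      ∀ c : A, ψ (algebraMap A B c) = (ev c : ℂ) := by
  haveI := hq
  have hkey : ∀ c : A, Ideal.Quotient.mk q (algebraMap A B (algebraMap ℝ A (ev c)))
      = Ideal.Quotient.mk q (algebraMap A B c) := by
    intro c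
    rw [Ideal.Quotient.mk_eq_mk_iff_sub_mem, ← map_sub]
    have hm : algebraMap ℝ A (ev c) - c ∈ RingHom.ker ev := by
      rw [RingHom.mem_ker, map_sub, hev, sub_self]
    exact hker hm
  have hcomp : (algebraMap ℝ (B ⧸ q)).comp ev
      = (Ideal.Quotient.mk q).comp (algebraMap A B) := by
    ext c
    simp only [RingHom.comp_apply]
    rw [IsScalarTower.algebraMap_apply ℝ B (B ⧸ q), Ideal.Quotient.algebraMap_eq,
      IsScalarTower.algebraMap_apply ℝ A B]
    exact hkey c
  have halg : ∀ y : B ⧸ q, IsIntegral ℝ y := by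
    intro y
    obtain ⟨b, rfl⟩ := Ideal.Quotient.mk_surjective y
    obtain ⟨P, hPm, hP⟩ := Algebra.IsIntegral.isIntegral (R := A) b
    refine ⟨P.map ev, hPm.map _, ?_⟩
    rw [Polynomial.eval₂_map, hcomp, ← Polynomial.hom_eval₂, hP, map_zero]
  haveI : Algebra.IsAlgebraic ℝ (B ⧸ q) := ⟨fun y => (halg y).isAlgebraic⟩
  haveI : NoZeroSMulDivisors ℝ (B ⧸ q) :=
    GroupWithZero.toNoZeroSMulDivisors
  let L : (B ⧸ q) →ₐ[ℝ] ℂ := IsAlgClosed.lift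
  refine ⟨L.comp (Ideal.Quotient.mkₐ ℝ q), ?_, ?_⟩
  · intro b hb
    show L (Ideal.Quotient.mkₐ ℝ q b) = 0
    rw [Ideal.Quotient.mkₐ_eq_mk, Ideal.Quotient.eq_zero_iff_mem.mpr hb, map_zero]
  · intro c
    show L (Ideal.Quotient.mkₐ ℝ q (algebraMap A B c)) = _
    rw [Ideal.Quotient.mkₐ_eq_mk]
    have h1 : Ideal.Quotient.mk q (algebraMap A B c) = algebraMap ℝ (B ⧸ q) (ev c) := by
      have h2 := congrFun (congrArg DFunLike.coe hcomp) c
      simpa using h2.symm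
    rw [h1, AlgHom.commutes]
    rfl

set_option maxHeartbeats 1000000 in
/-- If `f ∈ K^{R+}(X(ℝ))` and `V ⊆ X` is the real subvariety defined by a real prime ideal
`p` of the coordinate ring, then the restriction of `f` to `V(ℝ)` is rational: there are
`a b` in the coordinate ring with `b ∉ p` such that `f·b = a` on the nonvanishing locus of
`b` in `V(ℝ)`. -/
theorem KRplus_restriction_rational
    (n : ℕ) (I : Ideal (MvPolynomial (Fin n) ℝ)) [I.IsPrime] (hIreal : I.IsRealIdeal)
    (K : Type*) [Field K] [Algebra (CoordRing n I) K] [IsFractionRing (CoordRing n I) K]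
    [Algebra ℝ K] [IsScalarTower ℝ (CoordRing n I) K]
    (f : ↥(XR n I) → ℝ) (hf : KRplus n I K f)
    (p : Ideal (CoordRing n I)) (hp : p.IsPrime) (hpreal : p.IsRealIdeal) :
    ∃ a b : CoordRing n I, b ∉ p ∧
      ∀ (x : Fin n → ℝ) (hx : x ∈ XR n I),
        (∀ c ∈ p, evR hx c = 0) →  -- `x ∈ V(ℝ)`
        evR hx b ≠ 0 →
        f ⟨x, hx⟩ * evR hx b = evR hx a := by
  haveI := hp
  obtain ⟨g, hg, hgψ⟩ := hf
  haveI : Algebra.IsIntegral (CoordRing n I) ↥(integralClosure (CoordRing n I) K) :=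
    ⟨integralClosure.isIntegral⟩
  have hinj : Function.Injective
      (algebraMap (CoordRing n I) ↥(integralClosure (CoordRing n I) K)) := by
    intro c d hcd
    apply IsFractionRing.injective (CoordRing n I) K
    rw [IsScalarTower.algebraMap_apply (CoordRing n I) ↥(integralClosure (CoordRing n I) K) K,
      IsScalarTower.algebraMap_apply (CoordRing n I) ↥(integralClosure (CoordRing n I) K) K, hcd]
  obtain ⟨a, s, hs, q, hqprime, hqle, hmemq⟩ := RSemi.exists_rep hinj hg p hp hpreal
  refine ⟨a, s, hs, ?_⟩
  intro x hx hxp _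
  have hevscalar : ∀ t : ℝ, evR hx (algebraMap ℝ (CoordRing n I) t) = t := by
    intro t
    rw [IsScalarTower.algebraMap_apply ℝ (MvPolynomial (Fin n) ℝ) (CoordRing n I),
      Ideal.Quotient.algebraMap_eq]
    simp [evR, MvPolynomial.algebraMap_eq]
  haveI : (RingHom.ker (evR hx)).IsPrime := RingHom.ker_isPrime _
  obtain ⟨q', hqq', hq'prime, hq'comap⟩ :=
    Ideal.exists_ideal_over_prime_of_isIntegral (RingHom.ker (evR hx)) q
      (le_trans hqle (fun c hc => RingHom.mem_ker.mpr (hxp c hc)))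
  obtain ⟨ψ, hψ0, hψa⟩ :=
    exists_algHom_to_C q' hq'prime (evR hx) hevscalar (le_of_eq hq'comap.symm)
  have hgf : ψ g = (f ⟨x, hx⟩ : ℂ) := hgψ x hx ψ hψa
  have hψh := hψ0 _ (hqq' hmemq)
  rw [map_sub, map_mul, hψa, hψa, hgf] at hψh
  have hfin : ((f ⟨x, hx⟩ * evR hx s : ℝ) : ℂ) = ((evR hx a : ℝ) : ℂ) := by
    push_cast
    linear_combination hψh
  exact_mod_cast hfin
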